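/- Let G be a finite abelian group whose order is not divisible by the characteristic of the field K, let θ : G × G → K^× be a nondegenerate bicharacter, let H := K[G] be the group algebra with coproduct Δ(g) = g ⊗ g, and set R := (1/|G|) ∑_{g,g' ∈ G} θ(g,g') g ⊗ g' ∈ H ⊗ H. Then R is a universal R-matrix for H; explicitly: (i) R is invertible in H ⊗ H with inverse (1/|G|) ∑_{g,g' ∈ G} θ(g⁻¹,g') g ⊗ g'; (ii) writing R = ∑ᵢ aᵢ ⊗ bᵢ, one has (Δ ⊗ id)(R) = ∑_{i,j} aᵢ ⊗ a_j ⊗ bᵢb_j; (iii) (id ⊗ Δ)(R) = ∑_{i,j} aᵢa_j ⊗ b_j ⊗ bᵢ; (iv) for all h ∈ H, ∑ᵢ h₂aᵢ ⊗ h₁bᵢ = ∑ᵢ aᵢh₁ ⊗ bᵢh₂, where Δ(h) = h₁ ⊗ h₂ in Sweedler notation. -/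

import Mathlib

open TensorProduct

set_option linter.unusedSectionVars false
set_option maxHeartbeats 1000000

section ThetaAux
variable {K : Type*} [Field K] {G : Type*} [CommGroup G] [Fintype G] [DecidableEq G]
  (θ : G → G → Kˣ)
  (hbr : ∀ g g' g'' : G, θ g (g' * g'') = θ g g' * θ g g'')
  (hbl : ∀ g g' g'' : G, θ (g * g') g'' = θ g g'' * θ g' g'')
include hbr hbl

lemma theta_one_right (g : G) : θ g 1 = 1 := by
  have := hbr g 1 1; rw [mul_one] at this; exact (left_eq_mul.mp this)

lemma theta_one_left (g : G) : θ 1 g = 1 := by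
  have := hbl 1 1 g; rw [mul_one] at this; exact (left_eq_mul.mp this)

lemma theta_inv_left (g g' : G) : θ g⁻¹ g' = (θ g g')⁻¹ := by
  have := hbl g⁻¹ g g'
  rw [inv_mul_cancel, theta_one_left θ hbr hbl] at this
  exact eq_inv_of_mul_eq_one_left this.symm

lemma theta_inv_right (g g' : G) : θ g g'⁻¹ = (θ g g')⁻¹ := by
  have := hbr g g'⁻¹ g'
  rw [inv_mul_cancel, theta_one_right θ hbr hbl] at this
  exact eq_inv_of_mul_eq_one_left this.symm

lemma sum_theta_right (hnondeg : ∀ g : G, (∀ g' : G, θ g g' = 1) → g = 1) (g : G) :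
    ∑ g' : G, (θ g g' : K) = if g = 1 then (Fintype.card G : K) else 0 := by
  rcases eq_or_ne g 1 with rfl | hg
  · simp only [theta_one_left θ hbr hbl, if_pos rfl, Units.val_one]
    simp [Finset.card_univ]
  · simp only [if_neg hg]
    have h1 : ¬ ∀ g' : G, θ g g' = 1 := fun h => hg (hnondeg g h)
    push_neg at h1
    obtain ⟨g0, hg0⟩ := h1
    have key : (θ g g0 : K) * ∑ g' : G, (θ g g' : K) = ∑ g' : G, (θ g g' : K) := by
      rw [Finset.mul_sum]
      exact Fintype.sum_equiv (Equiv.mulLeft g0) _ _ (fun x => by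
        rw [← Units.val_mul, ← hbr]; rfl)
    have h2 : ((θ g g0 : K) - 1) * ∑ g' : G, (θ g g' : K) = 0 := by
      rw [sub_mul, one_mul, key, sub_self]
    rcases mul_eq_zero.mp h2 with h | h
    · exact absurd (Units.ext (by simpa using sub_eq_zero.mp h)) hg0
    · exact h

omit hbr hbl in
lemma card_ne_zero' (hchar : ¬ (ringChar K ∣ Fintype.card G)) : (Fintype.card G : K) ≠ 0 := by
  have : CharP K (ringChar K) := ringChar.charP K
  rw [Ne, CharP.cast_eq_zero_iff K (ringChar K)]
  exact hchar

lemma sum_theta_left (hchar : ¬ (ringChar K ∣ Fintype.card G))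
    (hnondeg : ∀ g : G, (∀ g' : G, θ g g' = 1) → g = 1) (g' : G) :
    ∑ g : G, (θ g g' : K) = if g' = 1 then (Fintype.card G : K) else 0 := by
  have hN : (Fintype.card G : K) ≠ 0 := card_ne_zero' hchar
  set A : Matrix G G K := fun i j => (θ i j : K) with hA
  set B : Matrix G G K := fun i j => (Fintype.card G : K)⁻¹ * (θ j⁻¹ i : K) with hB
  have hAB : A * B = 1 := by
    ext g h
    rw [Matrix.mul_apply]
    have step : ∀ j : G, A g j * B j h = (Fintype.card G : K)⁻¹ * (θ (g * h⁻¹) j : K) := by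
      intro j
      rw [hA, hB]
      simp only
      rw [hbl, Units.val_mul, theta_inv_left θ hbr hbl, Units.val_inv_eq_inv_val]
      field_simp
    rw [Finset.sum_congr rfl (fun j _ => step j), ← Finset.mul_sum,
        sum_theta_right θ hbr hbl hnondeg]
    by_cases hgh : g = h
    · subst hgh; simp [Matrix.one_apply, inv_mul_cancel₀ hN]
    · have hne : ¬ (g * h⁻¹ = 1) := by simpa [mul_inv_eq_one] using hgh
      simp [Matrix.one_apply, hne, hgh]
  have hBA : B * A = 1 := mul_eq_one_comm.mp hAB
  have key := congrFun (congrFun hBA 1) g'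
  rw [Matrix.mul_apply] at key
  have step2 : ∀ g : G, B 1 g * A g g' = (Fintype.card G : K)⁻¹ * (θ g g' : K) := by
    intro g
    rw [hA, hB]
    simp only
    rw [theta_one_right θ hbr hbl]
    simp
  rw [Finset.sum_congr rfl (fun g _ => step2 g), ← Finset.mul_sum] at key
  rcases eq_or_ne g' 1 with rfl | hg'
  · rw [Matrix.one_apply_eq] at key
    rw [if_pos rfl]
    field_simp at key
    exact key
  · rw [Matrix.one_apply_ne (fun h => hg' h.symm)] at key
    rcases mul_eq_zero.mp key with h | h
    · exact absurd h (inv_ne_zero hN)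
    · simp [hg', h]
end ThetaAux

/-- The coproduct of the group algebra `K[G]`, determined by `Δ(g) = g ⊗ g`. -/
noncomputable def groupAlgebraComul (K : Type*) [Field K] (G : Type*) [CommGroup G] :
    MonoidAlgebra K G →ₗ[K] MonoidAlgebra K G ⊗[K] MonoidAlgebra K G :=
  (Finsupp.lsum K fun g => LinearMap.toSpanSingleton K _
    (MonoidAlgebra.of K G g ⊗ₜ[K] MonoidAlgebra.of K G g)) ∘ₗ
      (MonoidAlgebra.coeffLinearEquiv K).toLinearMap

section AlgAux
variable {K : Type*} [Field K] {G : Type*} [CommGroup G] [Fintype G]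

lemma comul_of (g : G) : groupAlgebraComul K G (MonoidAlgebra.of K G g)
    = MonoidAlgebra.of K G g ⊗ₜ[K] MonoidAlgebra.of K G g := by
  show groupAlgebraComul K G (MonoidAlgebra.single g 1) = _
  rw [groupAlgebraComul, LinearMap.comp_apply]
  change ((Finsupp.lsum K) _) (Finsupp.single g (1:K)) = _
  rw [Finsupp.lsum_single]
  rw [LinearMap.toSpanSingleton_apply, one_smul]

lemma comm_comul (x : MonoidAlgebra K G) :
    (TensorProduct.comm K (MonoidAlgebra K G) (MonoidAlgebra K G))
      (groupAlgebraComul K G x) = groupAlgebraComul K G x := by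
  have : (TensorProduct.comm K (MonoidAlgebra K G) (MonoidAlgebra K G)).toLinearMap ∘ₗ
      groupAlgebraComul K G = groupAlgebraComul K G := by
    apply MonoidAlgebra.lhom_ext'
    intro a
    apply LinearMap.ext_ring
    simp [groupAlgebraComul, Finsupp.lsum_single, LinearMap.toSpanSingleton_apply]
  exact congrFun (congrArg DFunLike.coe this) x

lemma of_mul (g h : G) : MonoidAlgebra.of K G g * MonoidAlgebra.of K G h
    = MonoidAlgebra.of K G (g * h) := (map_mul _ g h).symm

lemma expand_mul (a b : G → G → K) :
    ((∑ g : G, ∑ g' : G, a g g' • (MonoidAlgebra.of K G g ⊗ₜ[K] MonoidAlgebra.of K G g')) *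
     (∑ h : G, ∑ h' : G, b h h' • (MonoidAlgebra.of K G h ⊗ₜ[K] MonoidAlgebra.of K G h'))) =
    ∑ g : G, ∑ h : G, ∑ g' : G, ∑ h' : G, (a g g' * b h h') •
      (MonoidAlgebra.of K G (g * h) ⊗ₜ[K] MonoidAlgebra.of K G (g' * h')) := by
  rw [Finset.sum_mul_sum]
  refine Finset.sum_congr rfl fun g _ => Finset.sum_congr rfl fun h _ => ?_
  rw [Finset.sum_mul_sum]
  refine Finset.sum_congr rfl fun g' _ => Finset.sum_congr rfl fun h' _ => ?_
  rw [smul_mul_smul_comm, Algebra.TensorProduct.tmul_mul_tmul, of_mul, of_mul]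

lemma one_tmul_one : (1 : MonoidAlgebra K G ⊗[K] MonoidAlgebra K G)
    = MonoidAlgebra.of K G 1 ⊗ₜ[K] MonoidAlgebra.of K G 1 := by
  rw [Algebra.TensorProduct.one_def, map_one]
end AlgAux

section Core
variable {K : Type*} [Field K] {G : Type*} [CommGroup G] [Fintype G] [DecidableEq G]
  (θ : G → G → Kˣ) (N : K)
  (hoR : ∀ g : G, ∑ g' : G, (θ g g' : K) = if g = 1 then N else 0)
  (hoL : ∀ g' : G, ∑ g : G, (θ g g' : K) = if g' = 1 then N else 0)
  (hbr : ∀ g g' g'' : G, θ g (g' * g'') = θ g g' * θ g g'')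
  (hbl : ∀ g g' g'' : G, θ (g * g') g'' = θ g g'' * θ g' g'')
  (hinvl : ∀ g g' : G, θ g⁻¹ g' = (θ g g')⁻¹)
  (hinvr : ∀ g g' : G, θ g g'⁻¹ = (θ g g')⁻¹)

local notation "o" => MonoidAlgebra.of K G

include hoR hoL hbr hbl hinvl hinvr in
lemma core_i :
    (∑ g : G, ∑ h : G, ∑ g' : G, ∑ h' : G, ((θ g g' : K) * (θ h⁻¹ h' : K)) •
      (o (g * h) ⊗ₜ[K] o (g' * h'))) =
    N • N • (o (1:G) ⊗ₜ[K] o (1:G)) := by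
  have hcoef : ∀ g h g' x : G, (θ g g' : K) * (θ h⁻¹ (g'⁻¹ * x) : K)
      = (θ (g * h) g' : K) * (θ h⁻¹ x : K) := by
    intro g h g' x
    rw [← Units.val_mul, ← Units.val_mul, hbr, hinvl, hinvr, inv_inv, hbl]
    congr 1
    group
  have step1 : ∀ g h g' : G,
      (∑ h' : G, ((θ g g' : K) * (θ h⁻¹ h' : K)) • (o (g * h) ⊗ₜ[K] o (g' * h')))
      = ∑ x : G, ((θ (g*h) g' : K) * (θ h⁻¹ x : K)) • (o (g * h) ⊗ₜ[K] o x) := by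
    intro g h g'
    refine Fintype.sum_equiv (Equiv.mulLeft g') _ _ (fun h' => ?_)
    simp only [Equiv.coe_mulLeft]
    rw [← hcoef g h g' (g' * h')]
    simp [inv_mul_cancel_left]
  simp_rw [step1]
  have step2 : ∀ g h : G,
      (∑ g' : G, ∑ x : G, ((θ (g*h) g' : K) * (θ h⁻¹ x : K)) • (o (g * h) ⊗ₜ[K] o x))
      = (if g * h = 1 then N else 0) • ∑ x : G, (θ h⁻¹ x : K) • (o (g * h) ⊗ₜ[K] o x) := by
    intro g h
    rw [← hoR (g*h), Finset.sum_smul]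
    refine Finset.sum_congr rfl fun g' _ => ?_
    rw [Finset.smul_sum]
    refine Finset.sum_congr rfl fun x _ => ?_
    rw [mul_smul]
  simp_rw [step2]
  have step3 : ∀ g : G,
      (∑ h : G, (if g * h = 1 then N else 0) • ∑ x : G, (θ h⁻¹ x : K) • (o (g * h) ⊗ₜ[K] o x))
      = N • ∑ x : G, (θ g x : K) • (o (1:G) ⊗ₜ[K] o x) := by
    intro g
    have key : ∀ h : G, (if g * h = 1 then N else 0) •
        (∑ x : G, (θ h⁻¹ x : K) • (o (g * h) ⊗ₜ[K] o x))
        = (if g⁻¹ = h then N • ∑ x : G, (θ h⁻¹ x : K) • (o (g * h) ⊗ₜ[K] o x) else 0) := by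
      intro h
      by_cases hgh : g⁻¹ = h
      · rw [if_pos hgh, if_pos (by rw [← hgh]; simp)]
      · rw [if_neg hgh, if_neg (fun hh => hgh (mul_eq_one_iff_inv_eq.mp hh)), zero_smul]
    simp_rw [key]
    rw [Finset.sum_ite_eq]
    simp [inv_inv]
  simp_rw [step3]
  rw [← Finset.smul_sum, Finset.sum_comm]
  congr 1
  have pull : ∀ x : G, (∑ g : G, (θ g x : K) • (o (1:G) ⊗ₜ[K] o x))
      = (∑ g : G, (θ g x : K)) • (o (1:G) ⊗ₜ[K] o x) := fun x => (Finset.sum_smul).symm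
  simp_rw [pull, hoL]
  have key : ∀ x : G, (if x = 1 then N else 0) • (o (1:G) ⊗ₜ[K] o x)
      = (if x = 1 then N • (o (1:G) ⊗ₜ[K] o x) else 0) := by
    intro x; split <;> simp
  simp_rw [key]
  rw [Finset.sum_ite_eq']
  simp

include hoR hbr hbl hinvl hinvr in
lemma core_ii :
    (∑ g : G, ∑ g' : G, ∑ h : G, ∑ h' : G, ((θ g g' : K) * (θ h h' : K)) •
      ((o g ⊗ₜ[K] o h) ⊗ₜ[K] o (g' * h'))) =
    N • ∑ g : G, ∑ x : G, (θ g x : K) • ((o g ⊗ₜ[K] o g) ⊗ₜ[K] o x) := by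
  have hcoef : ∀ g h g' x : G, (θ g g' : K) * (θ h (g'⁻¹ * x) : K)
      = (θ (g * h⁻¹) g' : K) * (θ h x : K) := by
    intro g h g' x
    rw [← Units.val_mul, ← Units.val_mul, hbr, hinvr, hbl, hinvl]
    congr 1
    group
  have step1 : ∀ g g' h : G,
      (∑ h' : G, ((θ g g' : K) * (θ h h' : K)) • ((o g ⊗ₜ[K] o h) ⊗ₜ[K] o (g' * h')))
      = ∑ x : G, ((θ (g * h⁻¹) g' : K) * (θ h x : K)) • ((o g ⊗ₜ[K] o h) ⊗ₜ[K] o x) := by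
    intro g g' h
    refine Fintype.sum_equiv (Equiv.mulLeft g') _ _ (fun h' => ?_)
    simp only [Equiv.coe_mulLeft]
    rw [← hcoef g h g' (g' * h')]
    simp [inv_mul_cancel_left]
  simp_rw [step1]
  have swap : ∀ g : G,
      (∑ g' : G, ∑ h : G, ∑ x : G, ((θ (g * h⁻¹) g' : K) * (θ h x : K)) •
        ((o g ⊗ₜ[K] o h) ⊗ₜ[K] o x))
      = ∑ h : G, ∑ g' : G, ∑ x : G, ((θ (g * h⁻¹) g' : K) * (θ h x : K)) •
        ((o g ⊗ₜ[K] o h) ⊗ₜ[K] o x) := fun g => Finset.sum_comm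
  simp_rw [swap]
  have step2 : ∀ g h : G,
      (∑ g' : G, ∑ x : G, ((θ (g * h⁻¹) g' : K) * (θ h x : K)) •
        ((o g ⊗ₜ[K] o h) ⊗ₜ[K] o x))
      = (if g * h⁻¹ = 1 then N else 0) •
        ∑ x : G, (θ h x : K) • ((o g ⊗ₜ[K] o h) ⊗ₜ[K] o x) := by
    intro g h
    rw [← hoR (g * h⁻¹), Finset.sum_smul]
    refine Finset.sum_congr rfl fun g' _ => ?_
    rw [Finset.smul_sum]
    exact Finset.sum_congr rfl fun x _ => mul_smul _ _ _
  simp_rw [step2]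
  have step3 : ∀ g : G,
      (∑ h : G, (if g * h⁻¹ = 1 then N else 0) •
        ∑ x : G, (θ h x : K) • ((o g ⊗ₜ[K] o h) ⊗ₜ[K] o x))
      = N • ∑ x : G, (θ g x : K) • ((o g ⊗ₜ[K] o g) ⊗ₜ[K] o x) := by
    intro g
    have key : ∀ h : G, (if g * h⁻¹ = 1 then N else 0) •
        (∑ x : G, (θ h x : K) • ((o g ⊗ₜ[K] o h) ⊗ₜ[K] o x))
        = (if g = h then N • ∑ x : G, (θ h x : K) • ((o g ⊗ₜ[K] o h) ⊗ₜ[K] o x) else 0) := by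
      intro h
      by_cases hgh : g = h
      · rw [if_pos hgh, if_pos (by rw [hgh]; simp)]
      · rw [if_neg hgh, if_neg (fun hh => hgh (mul_inv_eq_one.mp hh)), zero_smul]
    simp_rw [key]
    rw [Finset.sum_ite_eq]
    simp
  simp_rw [step3]
  rw [Finset.smul_sum]

include hoL hbr hbl hinvl hinvr in
lemma core_iii :
    (∑ g : G, ∑ g' : G, ∑ h : G, ∑ h' : G, ((θ g g' : K) * (θ h h' : K)) •
      (o (g * h) ⊗ₜ[K] (o h' ⊗ₜ[K] o g'))) =
    N • ∑ g : G, ∑ x : G, (θ g x : K) • (o g ⊗ₜ[K] (o x ⊗ₜ[K] o x)) := by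
  have hcoef : ∀ g g' x h' : G, (θ g g' : K) * (θ (g⁻¹ * x) h' : K)
      = (θ g (g' * h'⁻¹) : K) * (θ x h' : K) := by
    intro g g' x h'
    rw [← Units.val_mul, ← Units.val_mul, hbl, hinvl, hbr, hinvr]
    congr 1
    group
  have step1 : ∀ g g' : G,
      (∑ h : G, ∑ h' : G, ((θ g g' : K) * (θ h h' : K)) •
        (o (g * h) ⊗ₜ[K] (o h' ⊗ₜ[K] o g')))
      = ∑ x : G, ∑ h' : G, ((θ g (g' * h'⁻¹) : K) * (θ x h' : K)) •
        (o x ⊗ₜ[K] (o h' ⊗ₜ[K] o g')) := by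
    intro g g'
    refine Fintype.sum_equiv (Equiv.mulLeft g) _ _ (fun h => ?_)
    simp only [Equiv.coe_mulLeft]
    refine Finset.sum_congr rfl fun h' _ => ?_
    rw [← hcoef g g' (g * h) h']
    simp [inv_mul_cancel_left]
  simp_rw [step1]
  rw [Finset.sum_comm]
  have swap2 : ∀ g' : G,
      (∑ g : G, ∑ x : G, ∑ h' : G, ((θ g (g' * h'⁻¹) : K) * (θ x h' : K)) •
        (o x ⊗ₜ[K] (o h' ⊗ₜ[K] o g')))
      = ∑ x : G, ∑ h' : G, ∑ g : G, ((θ g (g' * h'⁻¹) : K) * (θ x h' : K)) •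
        (o x ⊗ₜ[K] (o h' ⊗ₜ[K] o g')) := by
    intro g'
    rw [Finset.sum_comm]
    exact Finset.sum_congr rfl fun x _ => Finset.sum_comm
  simp_rw [swap2]
  have step2 : ∀ g' x h' : G,
      (∑ g : G, ((θ g (g' * h'⁻¹) : K) * (θ x h' : K)) • (o x ⊗ₜ[K] (o h' ⊗ₜ[K] o g')))
      = (if g' * h'⁻¹ = 1 then N else 0) • (θ x h' : K) • (o x ⊗ₜ[K] (o h' ⊗ₜ[K] o g')) := by
    intro g' x h'
    rw [← hoL (g' * h'⁻¹), Finset.sum_smul]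
    exact Finset.sum_congr rfl fun g _ => mul_smul _ _ _
  simp_rw [step2]
  have step3 : ∀ g' x : G,
      (∑ h' : G, (if g' * h'⁻¹ = 1 then N else 0) •
        (θ x h' : K) • (o x ⊗ₜ[K] (o h' ⊗ₜ[K] o g')))
      = N • (θ x g' : K) • (o x ⊗ₜ[K] (o g' ⊗ₜ[K] o g')) := by
    intro g' x
    have key : ∀ h' : G, (if g' * h'⁻¹ = 1 then N else 0) •
        ((θ x h' : K) • (o x ⊗ₜ[K] (o h' ⊗ₜ[K] o g')))
        = (if g' = h' then N • (θ x h' : K) • (o x ⊗ₜ[K] (o h' ⊗ₜ[K] o g')) else 0) := by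
      intro h'
      by_cases hgh : g' = h'
      · rw [if_pos hgh, if_pos (by rw [hgh]; simp)]
      · rw [if_neg hgh, if_neg (fun hh => hgh (mul_inv_eq_one.mp hh)), zero_smul]
    simp_rw [key]
    rw [Finset.sum_ite_eq]
    simp
  simp_rw [step3]
  rw [Finset.sum_comm, Finset.smul_sum]
  exact Finset.sum_congr rfl fun g _ => Finset.smul_sum.symm
end Core

theorem stmt_1 {K : Type*} [Field K] {G : Type*} [CommGroup G] [Fintype G]
    (hchar : ¬ (ringChar K ∣ Fintype.card G))
    (θ : G → G → Kˣ)
    (hbil_right : ∀ g g' g'' : G, θ g (g' * g'') = θ g g' * θ g g'')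
    (hbil_left : ∀ g g' g'' : G, θ (g * g') g'' = θ g g'' * θ g' g'')
    (hnondeg : ∀ g : G, (∀ g' : G, θ g g' = 1) → g = 1)
    (R R' : MonoidAlgebra K G ⊗[K] MonoidAlgebra K G)
    (hR : R = (Fintype.card G : K)⁻¹ •
      ∑ g : G, ∑ g' : G, (θ g g' : K) •
        (MonoidAlgebra.of K G g ⊗ₜ[K] MonoidAlgebra.of K G g'))
    (hR' : R' = (Fintype.card G : K)⁻¹ •
      ∑ g : G, ∑ g' : G, (θ g⁻¹ g' : K) •
        (MonoidAlgebra.of K G g ⊗ₜ[K] MonoidAlgebra.of K G g')) :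
    -- (i) `R` is invertible with inverse `R'`
    (R * R' = 1 ∧ R' * R = 1) ∧
    -- (ii) `(Δ ⊗ id)(R) = ∑ aᵢ ⊗ aⱼ ⊗ bᵢbⱼ`
    (TensorProduct.map (groupAlgebraComul K G) LinearMap.id R =
      ((Fintype.card G : K) * (Fintype.card G : K))⁻¹ •
        ∑ g : G, ∑ g' : G, ∑ h : G, ∑ h' : G,
          ((θ g g' : K) * (θ h h' : K)) •
            ((MonoidAlgebra.of K G g ⊗ₜ[K] MonoidAlgebra.of K G h) ⊗ₜ[K]
              (MonoidAlgebra.of K G g' * MonoidAlgebra.of K G h'))) ∧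
    -- (iii) `(id ⊗ Δ)(R) = ∑ aᵢaⱼ ⊗ bⱼ ⊗ bᵢ`
    (TensorProduct.map LinearMap.id (groupAlgebraComul K G) R =
      ((Fintype.card G : K) * (Fintype.card G : K))⁻¹ •
        ∑ g : G, ∑ g' : G, ∑ h : G, ∑ h' : G,
          ((θ g g' : K) * (θ h h' : K)) •
            ((MonoidAlgebra.of K G g * MonoidAlgebra.of K G h) ⊗ₜ[K]
              (MonoidAlgebra.of K G h' ⊗ₜ[K] MonoidAlgebra.of K G g'))) ∧
    -- (iv) `∑ h₂aᵢ ⊗ h₁bᵢ = ∑ aᵢh₁ ⊗ bᵢh₂`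
    (∀ h : MonoidAlgebra K G,
      (TensorProduct.comm K (MonoidAlgebra K G) (MonoidAlgebra K G))
          (groupAlgebraComul K G h) * R =
        R * groupAlgebraComul K G h) := by
  classical
  have hN : (Fintype.card G : K) ≠ 0 := card_ne_zero' hchar
  set N : K := (Fintype.card G : K) with hNdef
  have hoR := sum_theta_right θ hbil_right hbil_left hnondeg
  have hoL := sum_theta_left θ hbil_right hbil_left hchar hnondeg
  have hinvl := theta_inv_left θ hbil_right hbil_left
  have hinvr := theta_inv_right θ hbil_right hbil_left
  have part_i : R * R' = 1 := by
    rw [hR, hR', smul_mul_smul_comm, expand_mul,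
      core_i θ N hoR hoL hbil_right hbil_left hinvl hinvr,
      ← one_tmul_one, smul_smul, smul_smul]
    rw [show N⁻¹ * N⁻¹ * N * N = 1 by field_simp, one_smul]
  refine ⟨⟨part_i, by rw [mul_comm]; exact part_i⟩, ?_, ?_, ?_⟩
  · -- (ii)
    rw [hR, map_smul, map_sum]
    simp_rw [map_sum, map_smul, TensorProduct.map_tmul, comul_of, LinearMap.id_coe, id_eq]
    simp_rw [of_mul]
    rw [core_ii θ N hoR hbil_right hbil_left hinvl hinvr, smul_smul]
    rw [show (N * N)⁻¹ * N = N⁻¹ by field_simp]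
  · -- (iii)
    rw [hR, map_smul, map_sum]
    simp_rw [map_sum, map_smul, TensorProduct.map_tmul, comul_of, LinearMap.id_coe, id_eq]
    simp_rw [of_mul]
    rw [core_iii θ N hoL hbil_right hbil_left hinvl hinvr, smul_smul]
    rw [show (N * N)⁻¹ * N = N⁻¹ by field_simp]
  · -- (iv)
    intro h
    rw [comm_comul, mul_comm]
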